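/- Let g be a nonnegative homogeneous polynomial of degree d > 0 in n variables with ∫_{ℝⁿ} exp(−g) dx < ∞. Then ∫_{ℝⁿ} g(x) · exp(−g(x)) dx = (n/d) · ∫_{ℝⁿ} exp(−g(x)) dx. -/

import Mathlib

open MeasureTheory MvPolynomial

lemma eval_smul_homog {n d : ℕ} {g : MvPolynomial (Fin n) ℝ}
    (hg : g.IsHomogeneous d) (c : ℝ) (x : Fin n → ℝ) :
    eval (c • x) g = c ^ d * eval x g := by
  rw [eval_eq, eval_eq, Finset.mul_sum]
  refine Finset.sum_congr rfl fun m hm => ?_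
  rw [MvPolynomial.mem_support_iff] at hm
  have hw := hg hm
  rw [Finsupp.weight_apply] at hw
  simp only [Pi.one_apply, smul_eq_mul, mul_one, Finsupp.sum] at hw
  simp only [Pi.smul_apply, smul_eq_mul, mul_pow]
  rw [Finset.prod_mul_distrib, Finset.prod_pow_eq_pow_sum, hw]
  ring

theorem euler_identity_exp_integral
    (n d : ℕ) (hd : 0 < d)
    (g : MvPolynomial (Fin n) ℝ)
    (hg : g.IsHomogeneous d)
    (h0 : ∀ x : Fin n → ℝ, 0 ≤ eval x g)
    (hint : Integrable (fun x : Fin n → ℝ => Real.exp (-(eval x g)))) :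
    ∫ x : Fin n → ℝ, eval x g * Real.exp (-(eval x g)) =
      ((n : ℝ) / (d : ℝ)) * ∫ x : Fin n → ℝ, Real.exp (-(eval x g)) := by
  have hconteval : Continuous fun x : Fin n → ℝ => eval x g := g.continuous_eval
  have hdR : ((d : ℝ)) ≠ 0 := by exact_mod_cast hd.ne'
  -- scaling parameter
  have hroot : ∀ c : ℝ, 0 < c → (0 < c ^ ((d : ℝ)⁻¹) ∧ (c ^ ((d : ℝ)⁻¹)) ^ d = c) := by
    intro c hc
    refine ⟨Real.rpow_pos_of_pos hc _, ?_⟩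
    rw [← Real.rpow_natCast (c ^ ((d : ℝ)⁻¹)) d, ← Real.rpow_mul hc.le,
      inv_mul_cancel₀ hdR, Real.rpow_one]
  -- rewriting exp(-(c*g)) as a scaled version
  have hfun : ∀ c : ℝ, 0 < c →
      (fun x : Fin n → ℝ => Real.exp (-(c * eval x g))) =
        fun x : Fin n → ℝ => Real.exp (-(eval ((c ^ ((d : ℝ)⁻¹)) • x) g)) := by
    intro c hc
    funext x
    rw [eval_smul_homog hg, (hroot c hc).2]
  -- integrability of exp(-(c * g)) for c > 0
  have hintc : ∀ c : ℝ, 0 < c →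
      Integrable (fun x : Fin n → ℝ => Real.exp (-(c * eval x g))) := by
    intro c hc
    rw [hfun c hc]
    exact hint.comp_smul (hroot c hc).1.ne'
  set C := ∫ x : Fin n → ℝ, Real.exp (-(eval x g)) with hC
  set p : ℝ := -(n : ℝ) / d with hp
  -- scaling identity
  have key : ∀ t : ℝ, 0 < t →
      ∫ x : Fin n → ℝ, Real.exp (-(t * eval x g)) = t ^ p * C := by
    intro t ht
    rw [hfun t ht]
    rw [Measure.integral_comp_smul_of_nonneg volume
      (fun y : Fin n → ℝ => Real.exp (-(eval y g))) (t ^ ((d : ℝ)⁻¹))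
      (hR := (hroot t ht).1.le)]
    rw [smul_eq_mul, ← hC]
    congr 1
    rw [show Module.finrank ℝ (Fin n → ℝ) = n from Module.finrank_fin_fun ℝ]
    rw [← Real.rpow_natCast (t ^ ((d : ℝ)⁻¹)) n, ← Real.rpow_mul ht.le,
      ← Real.rpow_neg ht.le]
    congr 1
    field_simp [hp]
    rw [hp]; field_simp
  -- derivative via scaling
  have hF1 : HasDerivAt (fun t : ℝ => ∫ x : Fin n → ℝ, Real.exp (-(t * eval x g)))
      (p * C) 1 := by
    have h2 : HasDerivAt (fun t : ℝ => t ^ p * C) (p * (1 : ℝ) ^ (p - 1) * C) 1 :=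
      (Real.hasDerivAt_rpow_const (Or.inl one_ne_zero)).mul_const C
    rw [Real.one_rpow, mul_one] at h2
    apply h2.congr_of_eventuallyEq
    filter_upwards [Ioi_mem_nhds one_pos] with t ht using key t ht
  -- derivative via differentiation under the integral sign
  have hbound4 : ∀ x : Fin n → ℝ,
      eval x g * Real.exp (-(eval x g) / 2) ≤ 4 * Real.exp (-(4⁻¹ * eval x g)) := by
    intro x
    set u := eval x g with hu
    have hu0 : 0 ≤ u := h0 x
    have h1 : u * Real.exp (-(4⁻¹ * u)) ≤ 4 := by
      have hexp : u / 4 ≤ Real.exp (u / 4) := (Real.add_one_le_exp (u / 4)).trans'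
        (by linarith [Real.exp_pos (u / 4)]) |>.trans_eq rfl
      have hexp' : u / 4 ≤ Real.exp (u / 4) := by
        have := Real.add_one_le_exp (u / 4); linarith
      have h4 : u ≤ 4 * Real.exp (u / 4) := by linarith
      have : u * Real.exp (-(4⁻¹ * u)) ≤ 4 * Real.exp (u / 4) * Real.exp (-(4⁻¹ * u)) :=
        mul_le_mul_of_nonneg_right h4 (Real.exp_pos _).le
      refine this.trans ?_
      rw [mul_assoc, ← Real.exp_add]
      have : u / 4 + -(4⁻¹ * u) = 0 := by ring
      rw [this, Real.exp_zero, mul_one]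
    calc u * Real.exp (-u / 2)
        = (u * Real.exp (-(4⁻¹ * u))) * Real.exp (-(4⁻¹ * u)) := by
          rw [mul_assoc, ← Real.exp_add]; ring_nf
      _ ≤ 4 * Real.exp (-(4⁻¹ * u)) :=
          mul_le_mul_of_nonneg_right h1 (Real.exp_pos _).le
  have hbound_int : Integrable
      (fun x : Fin n → ℝ => eval x g * Real.exp (-(eval x g) / 2)) := by
    have h4 : Integrable (fun x : Fin n → ℝ => 4 * Real.exp (-((4 : ℝ)⁻¹ * eval x g))) :=
      (hintc (4⁻¹) (by norm_num)).const_mul 4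
    refine h4.mono ?_ ?_
    · exact ((hconteval.mul ((hconteval.neg.div_const 2).rexp))).aestronglyMeasurable
    · filter_upwards with x
      rw [Real.norm_eq_abs, Real.norm_eq_abs]
      rw [abs_of_nonneg (mul_nonneg (h0 x) (Real.exp_pos _).le),
        abs_of_nonneg (by positivity)]
      exact hbound4 x
  have hF2 := hasDerivAt_integral_of_dominated_loc_of_deriv_le (μ := (volume : Measure (Fin n → ℝ)))
    (F := fun (t : ℝ) (x : Fin n → ℝ) => Real.exp (-(t * eval x g)))
    (F' := fun (t : ℝ) (x : Fin n → ℝ) => Real.exp (-(t * eval x g)) * -(eval x g))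
    (bound := fun x : Fin n → ℝ => eval x g * Real.exp (-(eval x g) / 2))
    (x₀ := 1) (s := Metric.ball 1 (1/2)) (Metric.ball_mem_nhds _ (by norm_num))
    (by
      filter_upwards with t
      exact ((continuous_const.mul hconteval).neg.rexp).aestronglyMeasurable)
    (by simpa using hintc 1 one_pos)
    (by
      exact (((continuous_const.mul hconteval).neg.rexp).mul
        hconteval.neg).aestronglyMeasurable)
    (by
      filter_upwards with x t ht
      rw [Metric.mem_ball, Real.dist_eq] at ht
      have ht2 : (1 : ℝ) / 2 < t := by
        cases abs_sub_lt_iff.mp ht with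
        | intro h1 h2 => linarith
      rw [Real.norm_eq_abs, abs_mul, abs_neg, abs_of_nonneg (h0 x), Real.abs_exp,
        mul_comm]
      have hle : -(t * eval x g) ≤ -(eval x g) / 2 := by
        have := mul_le_mul_of_nonneg_right ht2.le (h0 x)
        nlinarith [h0 x]
      exact mul_le_mul_of_nonneg_left (Real.exp_le_exp.mpr hle) (h0 x))
    hbound_int
    (by
      filter_upwards with x t ht
      have h1 : HasDerivAt (fun s : ℝ => -(s * eval x g)) (-(eval x g)) t :=
        (hasDerivAt_mul_const (eval x g)).neg
      exact h1.exp)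
  have hF2' := hF2.2
  have huniq := hF2'.unique hF1
  -- huniq : ∫ x, exp(-(1 * g x)) * -(g x) = p * C
  have hneg : ∫ x : Fin n → ℝ, Real.exp (-(1 * eval x g)) * -(eval x g) =
      -∫ x : Fin n → ℝ, eval x g * Real.exp (-(eval x g)) := by
    rw [← integral_neg]
    congr 1
    funext x
    ring_nf
  rw [hneg] at huniq
  have : ∫ x : Fin n → ℝ, eval x g * Real.exp (-(eval x g)) = -(p * C) := by linarith
  rw [this, hp]
  ring
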